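/- For an [[n,1]] stabilizer code with bipartition A, B: if all three logical cosets X̄G, ȲG, Z̄G have representatives supported on A, then no logical coset has a representative supported on B. -/
import Mathlib


open Matrix BigOperators Finset

/-- The four single-qubit Pauli matrices `I, X, Y, Z`. -/
noncomputable def pauli1 : Fin 4 → Matrix (Fin 2) (Fin 2) ℂ :=
  ![(1 : Matrix (Fin 2) (Fin 2) ℂ),
    !![0, 1; 1, 0],
    !![0, -Complex.I; Complex.I, 0],
    !![1, 0; 0, -1]]

/-- The `n`-qubit Pauli string `⨂ₖ pauli1 (s k)` as a matrix on `(Fin n → Fin 2)`. -/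
noncomputable def pauliString {n : ℕ} (s : Fin n → Fin 4) :
    Matrix (Fin n → Fin 2) (Fin n → Fin 2) ℂ :=
  Matrix.of fun i j => ∏ k, pauli1 (s k) (i k) (j k)

/-- `M` is a Pauli operator with phase `±1`. -/
def IsPauliPM {n : ℕ} (M : Matrix (Fin n → Fin 2) (Fin n → Fin 2) ℂ) : Prop :=
  ∃ (ε : ℂ) (s : Fin n → Fin 4), (ε = 1 ∨ ε = -1) ∧ M = ε • pauliString s

/-- `M` is a `±1`-phase Pauli operator whose support is contained in `A`. -/
def SuppIn {n : ℕ} (A : Finset (Fin n)) (M : Matrix (Fin n → Fin 2) (Fin n → Fin 2) ℂ) : Prop :=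
  ∃ (ε : ℂ) (s : Fin n → Fin 4), (ε = 1 ∨ ε = -1) ∧ M = ε • pauliString s ∧
    ∀ k ∉ A, s k = 0

/-- The element `∏_{i : f i} g i` of the group generated by the (commuting) `g i`. -/
noncomputable def grpElem {n m : ℕ} (g : Fin m → Matrix (Fin n → Fin 2) (Fin n → Fin 2) ℂ)
    (f : Fin m → Bool) : Matrix (Fin n → Fin 2) (Fin n → Fin 2) ℂ :=
  ((List.finRange m).map (fun i => if f i then g i else 1)).prod

/-- Mixed-state stabilizer 2-Rényi entropy
`M̃₂(ρ) = −log₂( Σ_P Tr(ρP)⁴ / Σ_P Tr(ρP)² )`. -/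
noncomputable def sre2 {n : ℕ} (ρ : Matrix (Fin n → Fin 2) (Fin n → Fin 2) ℂ) : ℝ :=
  - Real.logb 2 (((∑ P : Fin n → Fin 4, ((ρ * pauliString P).trace) ^ 4) /
      (∑ P : Fin n → Fin 4, ((ρ * pauliString P).trace) ^ 2)).re)

/-- The logical coset `L⟨g⟩` has a (±1-phase) representative supported inside `A`. -/
def RepOn {n m : ℕ} (g : Fin m → Matrix (Fin n → Fin 2) (Fin n → Fin 2) ℂ)
    (A : Finset (Fin n)) (L : Matrix (Fin n → Fin 2) (Fin n → Fin 2) ℂ) : Prop :=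
  ∃ f : Fin m → Bool, SuppIn A (L * grpElem g f)


lemma pauli1_zero : pauli1 0 = 1 := rfl

lemma pauli1_mul_self (a : Fin 4) : pauli1 a * pauli1 a = 1 := by
  fin_cases a
  · simp [pauli1]
  · show !![0, 1; 1, 0] * !![0, 1; 1, 0] = 1
    rw [Matrix.mul_fin_two, Matrix.one_fin_two]; norm_num
  · show !![0, -Complex.I; Complex.I, 0] * !![0, -Complex.I; Complex.I, 0] = 1
    rw [Matrix.mul_fin_two, Matrix.one_fin_two]; norm_num [Complex.I_mul_I]
  · show !![1, 0; 0, -1] * !![1, 0; 0, -1] = (1 : Matrix (Fin 2) (Fin 2) ℂ)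
    rw [Matrix.mul_fin_two, Matrix.one_fin_two]; norm_num

lemma pauliString_mul {n : ℕ} (s t : Fin n → Fin 4) :
    pauliString s * pauliString t =
      Matrix.of fun i j => ∏ k, (pauli1 (s k) * pauli1 (t k)) (i k) (j k) := by
  ext i j
  simp only [pauliString, Matrix.mul_apply, Matrix.of_apply, ← Finset.prod_mul_distrib]
  rw [Finset.prod_univ_sum, Fintype.piFinset_univ]

lemma of_prod_one {n : ℕ} :
    (Matrix.of fun (i j : Fin n → Fin 2) => ∏ k, (1 : Matrix (Fin 2) (Fin 2) ℂ) (i k) (j k)) = 1 := by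
  ext i j
  simp only [Matrix.of_apply, Matrix.one_apply]
  by_cases h : i = j
  · subst h; simp [Matrix.one_apply]
  · have hk : ∃ k, i k ≠ j k := by
      by_contra hc; push_neg at hc; exact h (funext hc)
    obtain ⟨k, hk⟩ := hk
    rw [if_neg h]
    exact Finset.prod_eq_zero (mem_univ k) (by simp [Matrix.one_apply, hk])

lemma pauliString_mul_self {n : ℕ} (s : Fin n → Fin 4) :
    pauliString s * pauliString s = 1 := by
  rw [pauliString_mul]
  rw [show (Matrix.of fun (i j : Fin n → Fin 2) => ∏ k, (pauli1 (s k) * pauli1 (s k)) (i k) (j k))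
      = Matrix.of fun (i j : Fin n → Fin 2) => ∏ k, (1 : Matrix (Fin 2) (Fin 2) ℂ) (i k) (j k) by
    congr 1; funext i j; exact Finset.prod_congr rfl fun k _ => by rw [pauli1_mul_self]]
  exact of_prod_one

lemma isPauliPM_mul_self {n : ℕ} {M : Matrix (Fin n → Fin 2) (Fin n → Fin 2) ℂ}
    (h : IsPauliPM M) : M * M = 1 := by
  obtain ⟨ε, s, hε, rfl⟩ := h
  rw [smul_mul_assoc, mul_smul_comm, smul_smul, pauliString_mul_self]
  rcases hε with rfl | rfl <;> norm_num

lemma suppIn_mul_comm {n : ℕ} {A B : Finset (Fin n)} (hAB : ∀ k, k ∉ A ∨ k ∉ B)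
    {M N : Matrix (Fin n → Fin 2) (Fin n → Fin 2) ℂ}
    (hM : SuppIn A M) (hN : SuppIn B N) : M * N = N * M := by
  obtain ⟨ε, s, hε, rfl, hs⟩ := hM
  obtain ⟨δ, t, hδ, rfl, ht⟩ := hN
  suffices h : pauliString s * pauliString t = pauliString t * pauliString s by
    rw [smul_mul_assoc, mul_smul_comm, smul_mul_assoc, mul_smul_comm, h, smul_comm]
  rw [pauliString_mul, pauliString_mul]
  ext i j
  simp only [Matrix.of_apply]
  refine Finset.prod_congr rfl fun k _ => ?_
  rcases hAB k with h | h
  · rw [hs k h, show pauli1 0 = 1 from rfl, one_mul, mul_one]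
  · rw [ht k h, show pauli1 0 = 1 from rfl, one_mul, mul_one]

lemma keyFalse {n : ℕ} {M N : Matrix (Fin n → Fin 2) (Fin n → Fin 2) ℂ}
    (hM : IsPauliPM M) (hN : IsPauliPM N)
    (hc : M * N = N * M) (ha : M * N = -(N * M)) : False := by
  have h0 : N * M = 0 := by
    have h := hc.symm.trans ha
    ext i j
    have h2 := congrFun (congrFun h i) j
    simp only [Matrix.neg_apply] at h2
    have : (N * M) i j + (N * M) i j = 0 := by
      nth_rewrite 1 [h2]; ring
    simpa using add_self_eq_zero.mp this
  have hM0 : M = 0 := by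
    have h := congrArg (fun X => N * X) h0
    simpa [← mul_assoc, isPauliPM_mul_self hN] using h
  have h1 := isPauliPM_mul_self hM
  rw [hM0, mul_zero] at h1
  have := congrFun (congrFun h1 (fun _ => 0)) (fun _ => 0)
  simp [Matrix.one_apply] at this

lemma commute_grpElem {n m : ℕ} (g : Fin m → Matrix (Fin n → Fin 2) (Fin n → Fin 2) ℂ)
    (M : Matrix (Fin n → Fin 2) (Fin n → Fin 2) ℂ)
    (h : ∀ i, M * g i = g i * M) (f : Fin m → Bool) :
    M * grpElem g f = grpElem g f * M := by
  have hc : Commute M (((List.finRange m).map (fun i => if f i then g i else 1)).prod) := by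
    refine Commute.list_prod_right _ M fun x hx => ?_
    simp only [List.mem_map, List.mem_finRange] at hx
    obtain ⟨i, -, rfl⟩ := hx
    split_ifs with hf
    · exact h i
    · exact Commute.one_right M
  exact hc

lemma coset_anti {n : ℕ} (L L' G H : Matrix (Fin n → Fin 2) (Fin n → Fin 2) ℂ)
    (hLL : L * L' = -(L' * L))
    (hGL' : L' * G = G * L') (hHL : L * H = H * L) (hGH : G * H = H * G) :
    (L * G) * (L' * H) = -((L' * H) * (L * G)) := by
  have h1 : (L' * H) * (L * G) = (L' * L) * (G * H) := by
    rw [mul_assoc, ← mul_assoc H, ← hHL, mul_assoc L, ← hGH, ← mul_assoc, ← mul_assoc,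
      mul_assoc (L' * L)]
  have h2 : (L * G) * (L' * H) = (L * L') * (G * H) := by
    rw [mul_assoc, ← mul_assoc G, ← hGL', mul_assoc L', ← mul_assoc, ← mul_assoc,
      mul_assoc (L * L')]
  rw [h1, h2, hLL, neg_mul]

lemma suppIn_isPauliPM {n : ℕ} {A : Finset (Fin n)}
    {M : Matrix (Fin n → Fin 2) (Fin n → Fin 2) ℂ} (h : SuppIn A M) : IsPauliPM M := by
  obtain ⟨ε, s, hε, hM, -⟩ := h
  exact ⟨ε, s, hε, hM⟩

/-- for an [[n,1]] stabilizer code and bipartition `A, Aᶜ`: if all three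
logical cosets have representatives supported on `A`, then no logical coset has a
representative supported on `Aᶜ`. -/
theorem stmt_16 {n m : ℕ} (hnm : n = m + 1)
    (g : Fin m → Matrix (Fin n → Fin 2) (Fin n → Fin 2) ℂ)
    (Xb Zb Yb : Matrix (Fin n → Fin 2) (Fin n → Fin 2) ℂ)
    (hg : ∀ i, IsPauliPM (g i))
    (hcomm : ∀ i i', g i * g i' = g i' * g i)
    (hindep : ∀ f f' : Fin m → Bool, grpElem g f = grpElem g f' → f = f')
    (hnoNegI : ∀ f : Fin m → Bool, grpElem g f ≠ -1)
    (hXb : IsPauliPM Xb) (hZb : IsPauliPM Zb)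
    (hXcomm : ∀ i, Xb * g i = g i * Xb) (hZcomm : ∀ i, Zb * g i = g i * Zb)
    (hanti : Xb * Zb = -(Zb * Xb))
    (hXnot : ∀ (f : Fin m → Bool) (ε : ℂ), (ε = 1 ∨ ε = -1) → Xb ≠ ε • grpElem g f)
    (hZnot : ∀ (f : Fin m → Bool) (ε : ℂ), (ε = 1 ∨ ε = -1) → Zb ≠ ε • grpElem g f)
    (hYb : Yb = Complex.I • (Xb * Zb))
    (A : Finset (Fin n))
    (hA : RepOn g A Xb ∧ RepOn g A Yb ∧ RepOn g A Zb) :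
    ¬ (RepOn g Aᶜ Xb ∨ RepOn g Aᶜ Yb ∨ RepOn g Aᶜ Zb) := by
  obtain ⟨⟨fX, hfX⟩, ⟨fY, hfY⟩, ⟨fZ, hfZ⟩⟩ := hA
  -- disjointness of A and Aᶜ
  have hd : ∀ k : Fin n, k ∉ Aᶜ ∨ k ∉ A := by
    intro k
    by_cases hk : k ∈ A
    · left; simp [hk]
    · right; exact hk
  -- commutation of logicals with group elements
  have hGX : ∀ f, Xb * grpElem g f = grpElem g f * Xb :=
    fun f => commute_grpElem g Xb hXcomm f
  have hGZ : ∀ f, Zb * grpElem g f = grpElem g f * Zb :=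
    fun f => commute_grpElem g Zb hZcomm f
  have hGY : ∀ f, Yb * grpElem g f = grpElem g f * Yb := by
    intro f
    rw [hYb, smul_mul_assoc, mul_smul_comm, mul_assoc, hGZ f, ← mul_assoc, hGX f, mul_assoc]
  have hGG : ∀ f f', grpElem g f * grpElem g f' = grpElem g f' * grpElem g f := by
    intro f f'
    exact commute_grpElem g (grpElem g f)
      (fun i => (commute_grpElem g (g i) (fun j => hcomm i j) f).symm) f'
  -- anticommutation relations
  have hZX : Zb * Xb = -(Xb * Zb) := by rw [hanti, neg_neg]
  have hXY : Xb * Yb = -(Yb * Xb) := by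
    rw [hYb, mul_smul_comm, smul_mul_assoc, ← smul_neg]
    congr 1
    rw [mul_assoc, hZX, mul_neg, ← mul_assoc, neg_neg]
  have hYX : Yb * Xb = -(Xb * Yb) := by rw [hXY, neg_neg]
  have hYZ : Yb * Zb = -(Zb * Yb) := by
    rw [hYb, mul_smul_comm, smul_mul_assoc, ← smul_neg]
    congr 1
    rw [← mul_assoc Zb Xb Zb, hZX, neg_mul, neg_neg]
  have hZY : Zb * Yb = -(Yb * Zb) := by rw [hYZ, neg_neg]
  rintro (⟨h, hh⟩ | ⟨h, hh⟩ | ⟨h, hh⟩)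
  · -- Xb has a rep on Aᶜ; use Yb's rep on A
    exact keyFalse (suppIn_isPauliPM hh) (suppIn_isPauliPM hfY)
      (suppIn_mul_comm hd hh hfY)
      (coset_anti Xb Yb (grpElem g h) (grpElem g fY) hXY (hGY h) (hGX fY) (hGG h fY))
  · -- Yb has a rep on Aᶜ; use Xb's rep on A
    exact keyFalse (suppIn_isPauliPM hh) (suppIn_isPauliPM hfX)
      (suppIn_mul_comm hd hh hfX)
      (coset_anti Yb Xb (grpElem g h) (grpElem g fX) hYX (hGX h) (hGY fX) (hGG h fX))
  · -- Zb has a rep on Aᶜ; use Xb's rep on A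
    exact keyFalse (suppIn_isPauliPM hh) (suppIn_isPauliPM hfX)
      (suppIn_mul_comm hd hh hfX)
      (coset_anti Zb Xb (grpElem g h) (grpElem g fX) hZX (hGX h) (hGZ fX) (hGG h fX))
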